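/- (Lemma 4.3) Let S be a finite spin space (with counting measure) and let Φ be a translation invariant, absolutely summable interaction potential on ℤ^d. If A ⊂ ℤ^d is a nonempty finite set such that Φ_A : Ω_A → ℝ is non-constant, then there exists a continuous map c : [0,∞) → (0,∞), independent of Λ, such that Var_{Λ,β}(Φ_A) ≥ c(β) for all β ≥ 0 and all finite Λ ⊂ ℤ^d containing A. -/

import Mathlib

open Filter Topology

/-- The lattice `ℤ^d`. -/
abbrev Zd (d : ℕ) := Fin d → ℤ

/-- The configuration space `Ω_Λ = S^Λ` for a finite `Λ ⊆ ℤ^d`. -/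
abbrev Config (S : Type) {d : ℕ} (Λ : Finset (Zd d)) : Type := {x // x ∈ Λ} → S

/-- Restriction of a configuration on `Λ` to a subset `A ⊆ Λ`. -/
def restrictCfg {S : Type} {d : ℕ} {Λ A : Finset (Zd d)} (h : A ⊆ Λ) (ω : Config S Λ) :
    Config S A := fun a => ω ⟨a.1, h a.2⟩

/-- An interaction potential: a function `Φ_A : Ω_A → ℝ` for each finite `A ⊆ ℤ^d`. -/
abbrev Pot (d : ℕ) (S : Type) := (A : Finset (Zd d)) → Config S A → ℝ

/-- The sup norm `‖Φ_A‖_∞`. -/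
noncomputable def potNorm {d : ℕ} {S : Type} [Fintype S] [Nonempty S] (Φ : Pot d S)
    (A : Finset (Zd d)) : ℝ := ⨆ ω : Config S A, |Φ A ω|

/-- Translate of a finite set: `A + x`. -/
def shiftSet {d : ℕ} (x : Zd d) (A : Finset (Zd d)) : Finset (Zd d) := A.image (· + x)

/-- Translation invariance of a potential. -/
def TransInv {d : ℕ} {S : Type} (Φ : Pot d S) : Prop :=
  ∀ (x : Zd d) (A : Finset (Zd d)) (ω : Config S (shiftSet x A)),
    Φ (shiftSet x A) ω = Φ A (fun a => ω ⟨a.1 + x, Finset.mem_image_of_mem _ a.2⟩)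

/-- Absolute summability: `Σ_{A ∋ 0} ‖Φ_A‖ < ∞`. -/
def AbsSummable {d : ℕ} {S : Type} [Fintype S] [Nonempty S] (Φ : Pot d S) : Prop :=
  Summable (fun A : {A : Finset (Zd d) // (0 : Zd d) ∈ A} => potNorm Φ A.1)

/-- `‖Φ‖ = Σ_{A ∋ 0} ‖Φ_A‖`. -/
noncomputable def potFullNorm {d : ℕ} {S : Type} [Fintype S] [Nonempty S] (Φ : Pot d S) : ℝ :=
  ∑' A : {A : Finset (Zd d) // (0 : Zd d) ∈ A}, potNorm Φ A.1

/-- The Hamiltonian `H_Λ(ω) = Σ_{A ⊆ Λ} Φ_A(ω_A)`. -/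
noncomputable def Ham {d : ℕ} {S : Type} (Φ : Pot d S) (Λ : Finset (Zd d))
    (ω : Config S Λ) : ℝ :=
  ∑ A ∈ Λ.powerset.attach, Φ A.1 (restrictCfg (Finset.mem_powerset.mp A.2) ω)

/-- The hypercube `Λ_n = [-n, n]^d ∩ ℤ^d`. -/
noncomputable def cube (d n : ℕ) : Finset (Zd d) := Fintype.piFinset fun _ => Finset.Icc (-(n : ℤ)) n

/-- Energy per site `h_n(ω) = H_n(ω)/|Λ_n|`. -/
noncomputable def enDensity {d : ℕ} {S : Type} (Φ : Pot d S) (n : ℕ)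
    (ω : Config S (cube d n)) : ℝ := Ham Φ (cube d n) ω / (cube d n).card

/-- `𝕄_n(B) = #{ω ∈ Ω_n : h_n(ω) ∈ B}`. -/
noncomputable def Mcount {d : ℕ} {S : Type} [Fintype S] (Φ : Pot d S) (n : ℕ)
    (B : Set ℝ) : ℕ := Nat.card {ω : Config S (cube d n) // enDensity Φ n ω ∈ B}

/-- The sequence `(1/|Λ_n|) log 𝕄_n(B)`, with the convention `log 0 = -∞`. -/
noncomputable def mSeq {d : ℕ} {S : Type} [Fintype S] (Φ : Pot d S) (B : Set ℝ)
    (n : ℕ) : EReal :=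
  if Mcount Φ n B = 0 then ⊥
  else ((Real.log (Mcount Φ n B) / (cube d n).card : ℝ) : EReal)

/-- `m(B) = lim_n (1/|Λ_n|) log 𝕄_n(B)` (defined via `limsup`; the content that this is
an actual limit is asserted in the theorems). -/
noncomputable def mFun {d : ℕ} {S : Type} [Fintype S] (Φ : Pot d S) (B : Set ℝ) : EReal :=
  Filter.limsup (mSeq Φ B) Filter.atTop

/-- The microcanonical entropy `s(u) = lim_{r→0⁺} m((u-r, u+r))` (defined via `limsup`). -/
noncomputable def entropy {d : ℕ} {S : Type} [Fintype S] (Φ : Pot d S) (u : ℝ) : EReal :=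
  Filter.limsup (fun r : ℝ => mFun Φ (Set.Ioo (u - r) (u + r))) (nhdsWithin 0 (Set.Ioi 0))

/-- The partition function `Z_{Λ,β}`. -/
noncomputable def Zfun {d : ℕ} {S : Type} [Fintype S] (Φ : Pot d S) (Λ : Finset (Zd d))
    (β : ℝ) : ℝ := ∑ ω : Config S Λ, Real.exp (-β * Ham Φ Λ ω)

/-- The finite-volume pressure `ψ_Λ(β) = -(1/|Λ|) log Z_{Λ,β}`. -/
noncomputable def pressureFin {d : ℕ} {S : Type} [Fintype S] (Φ : Pot d S)
    (Λ : Finset (Zd d)) (β : ℝ) : ℝ := -Real.log (Zfun Φ Λ β) / Λ.card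

/-- The pressure sequence `-(1/|Λ_n|) log Z_{Λ_n,β}`. -/
noncomputable def pressureSeq {d : ℕ} {S : Type} [Fintype S] (Φ : Pot d S) (β : ℝ)
    (n : ℕ) : ℝ := pressureFin Φ (cube d n) β

/-- Gibbs expectation `⟨f⟩_{Λ,β}`. -/
noncomputable def gibbsExp {d : ℕ} {S : Type} [Fintype S] (Φ : Pot d S)
    (Λ : Finset (Zd d)) (β : ℝ) (f : Config S Λ → ℝ) : ℝ :=
  (∑ ω : Config S Λ, f ω * Real.exp (-β * Ham Φ Λ ω)) / Zfun Φ Λ β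

/-- Gibbs variance `Var_{Λ,β}(f)`. -/
noncomputable def gibbsVar {d : ℕ} {S : Type} [Fintype S] (Φ : Pot d S)
    (Λ : Finset (Zd d)) (β : ℝ) (f : Config S Λ → ℝ) : ℝ :=
  gibbsExp Φ Λ β (fun ω => (f ω) ^ 2) - (gibbsExp Φ Λ β f) ^ 2

/-- Gibbs covariance `Cov_{Λ,β}(f,g)`. -/
noncomputable def gibbsCov {d : ℕ} {S : Type} [Fintype S] (Φ : Pot d S)
    (Λ : Finset (Zd d)) (β : ℝ) (f g : Config S Λ → ℝ) : ℝ :=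
  gibbsExp Φ Λ β (fun ω => f ω * g ω) - gibbsExp Φ Λ β f * gibbsExp Φ Λ β g

/-- Gibbs probability `μ_{Λ,β}(E)`. -/
noncomputable def gibbsProb {d : ℕ} {S : Type} [Fintype S] (Φ : Pot d S)
    (Λ : Finset (Zd d)) (β : ℝ) (E : Set (Config S Λ)) : ℝ :=
  (∑ ω : Config S Λ, E.indicator (fun ω => Real.exp (-β * Ham Φ Λ ω)) ω) / Zfun Φ Λ β

/-- Positive correlation of the potential. -/
def PosCorr {d : ℕ} {S : Type} [Fintype S] (Φ : Pot d S) : Prop :=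
  ∀ (Λ A B : Finset (Zd d)) (hA : A ⊆ Λ) (hB : B ⊆ Λ) (β : ℝ), 0 < β →
    0 ≤ gibbsCov Φ Λ β (fun ω => Φ A (restrictCfg hA ω)) (fun ω => Φ B (restrictCfg hB ω))

/-- `#M_n(u) = #{ω ∈ Ω_n : H_n(ω) ≤ |Λ_n| u}`. -/
noncomputable def MvolCount {d : ℕ} {S : Type} [Fintype S] (Φ : Pot d S) (n : ℕ)
    (u : ℝ) : ℕ :=
  Nat.card {ω : Config S (cube d n) // Ham Φ (cube d n) ω ≤ (cube d n).card * u}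

/-- The sequence `(1/|Λ_n|) log #M_n(u)`, with the convention `log 0 = -∞`. -/
noncomputable def sigmaSeq {d : ℕ} {S : Type} [Fintype S] (Φ : Pot d S) (u : ℝ)
    (n : ℕ) : EReal :=
  if MvolCount Φ n u = 0 then ⊥
  else ((Real.log (MvolCount Φ n u) / (cube d n).card : ℝ) : EReal)

/-- `σ(u) = lim_n (1/|Λ_n|) log #M_n(u)` (defined via `limsup`). -/
noncomputable def sigmaFun {d : ℕ} {S : Type} [Fintype S] (Φ : Pot d S) (u : ℝ) : EReal :=
  Filter.limsup (sigmaSeq Φ u) Filter.atTop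

section Aux
variable {d : ℕ} {S : Type} [Fintype S] [Nonempty S]

lemma potNorm_nonneg (Φ : Pot d S) (B : Finset (Zd d)) : 0 ≤ potNorm Φ B :=
  Real.iSup_nonneg fun _ => abs_nonneg _

lemma abs_le_potNorm (Φ : Pot d S) (B : Finset (Zd d)) (ω : Config S B) :
    |Φ B ω| ≤ potNorm Φ B :=
  le_ciSup (f := fun ω => |Φ B ω|) (Set.Finite.bddAbove (Set.finite_range _)) ω

lemma potNorm_shift (Φ : Pot d S) (hTI : TransInv Φ) (x : Zd d) (B : Finset (Zd d)) :
    potNorm Φ (shiftSet x B) = potNorm Φ B := by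
  have hmem : ∀ b' : {y // y ∈ shiftSet x B}, b'.1 - x ∈ B := by
    intro b'
    rcases Finset.mem_image.mp b'.2 with ⟨b, hb, hbx⟩
    simpa [← hbx] using hb
  apply le_antisymm
  · apply ciSup_le
    intro ω
    rw [hTI]
    exact abs_le_potNorm ..
  · apply ciSup_le
    intro τ
    have h1 : Φ B τ = Φ (shiftSet x B) (fun b' => τ ⟨b'.1 - x, hmem b'⟩) := by
      rw [hTI]
      congr 1
      funext a
      exact congrArg τ (Subtype.ext (by simp))
    rw [h1]
    exact abs_le_potNorm ..

lemma shift_shift_cancel (x : Zd d) (B : Finset (Zd d)) :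
    shiftSet x (shiftSet (-x) B) = B := by
  ext y
  simp only [shiftSet, Finset.image_image, Function.comp, Finset.mem_image]
  constructor
  · rintro ⟨b, hb, rfl⟩
    simpa using hb
  · intro hy
    exact ⟨y, hy, by abel⟩

end Aux

section Aux2
variable {d : ℕ} {S : Type} [Fintype S] [Nonempty S]

lemma single_site_bound (Φ : Pot d S) (hTI : TransInv Φ) (hAS : AbsSummable Φ)
    (Λ : Finset (Zd d)) (x : Zd d) :
    ∑ B ∈ Λ.powerset.filter (fun B => x ∈ B), potNorm Φ B ≤ potFullNorm Φ := by
  set T := Λ.powerset.filter (fun B => x ∈ B) with hT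
  have hx : ∀ B ∈ T, x ∈ B := fun B hB => (Finset.mem_filter.mp hB).2
  have hmem0 : ∀ B : {B // B ∈ T}, (0 : Zd d) ∈ shiftSet (-x) B.1 := by
    intro B
    exact Finset.mem_image.mpr ⟨x, hx B.1 B.2, by abel⟩
  set e : {B // B ∈ T} → {C : Finset (Zd d) // (0 : Zd d) ∈ C} :=
    fun B => ⟨shiftSet (-x) B.1, hmem0 B⟩ with he
  have he_inj : Function.Injective e := by
    intro B B' h
    apply Subtype.ext
    have h2 := congrArg (fun C => shiftSet x C.1) h
    simpa [he, shift_shift_cancel] using h2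
  calc ∑ B ∈ T, potNorm Φ B
      = ∑ B ∈ T.attach, potNorm Φ (shiftSet (-x) B.1) := by
        rw [← Finset.sum_attach T (fun B => potNorm Φ B)]
        refine Finset.sum_congr rfl fun B _ => ?_
        rw [← potNorm_shift Φ hTI x (shiftSet (-x) B.1), shift_shift_cancel]
    _ = ∑ C ∈ T.attach.map ⟨e, he_inj⟩, potNorm Φ C.1 := by
        rw [Finset.sum_map]; rfl
    _ ≤ potFullNorm Φ :=
        Summable.sum_le_tsum _ (fun _ _ => potNorm_nonneg Φ _) hAS

lemma key_sum_bound (Φ : Pot d S) (hTI : TransInv Φ) (hAS : AbsSummable Φ)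
    (Λ A : Finset (Zd d)) :
    ∑ B ∈ Λ.powerset.filter (fun B => (A ∩ B).Nonempty), potNorm Φ B
      ≤ A.card * potFullNorm Φ := by
  have hnn := potNorm_nonneg Φ
  calc ∑ B ∈ Λ.powerset.filter (fun B => (A ∩ B).Nonempty), potNorm Φ B
      ≤ ∑ B ∈ Λ.powerset.filter (fun B => (A ∩ B).Nonempty),
          ((A ∩ B).card : ℝ) * potNorm Φ B := by
        refine Finset.sum_le_sum fun B hB => ?_
        have h1 : 1 ≤ ((A ∩ B).card : ℝ) := by
          exact_mod_cast Finset.card_pos.mpr (Finset.mem_filter.mp hB).2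
        nlinarith [hnn B]
    _ ≤ ∑ B ∈ Λ.powerset, ((A ∩ B).card : ℝ) * potNorm Φ B := by
        refine Finset.sum_le_sum_of_subset_of_nonneg (Finset.filter_subset _ _)
          fun B _ _ => mul_nonneg (by positivity) (hnn B)
    _ = ∑ B ∈ Λ.powerset, ∑ x ∈ A, (if x ∈ B then potNorm Φ B else 0) := by
        refine Finset.sum_congr rfl fun B _ => ?_
        rw [← Finset.sum_filter, Finset.sum_const, Finset.filter_mem_eq_inter,
          nsmul_eq_mul]
    _ = ∑ x ∈ A, ∑ B ∈ Λ.powerset, (if x ∈ B then potNorm Φ B else 0) :=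
        Finset.sum_comm
    _ = ∑ x ∈ A, ∑ B ∈ Λ.powerset.filter (fun B => x ∈ B), potNorm Φ B := by
        refine Finset.sum_congr rfl fun x _ => (Finset.sum_filter _ _).symm
    _ ≤ ∑ _x ∈ A, potFullNorm Φ :=
        Finset.sum_le_sum fun x _ => single_site_bound Φ hTI hAS Λ x
    _ = A.card * potFullNorm Φ := by rw [Finset.sum_const, nsmul_eq_mul]

end Aux2

section Glue
variable {d : ℕ} {S : Type} [Fintype S] [Nonempty S]

def glue {Λ A : Finset (Zd d)} (hAΛ : A ⊆ Λ) (σ : Config S A) (η : Config S (Λ \ A)) :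
    Config S Λ :=
  fun x => if h : x.1 ∈ A then σ ⟨x.1, h⟩ else η ⟨x.1, Finset.mem_sdiff.mpr ⟨x.2, h⟩⟩

lemma restrict_glue {Λ A : Finset (Zd d)} (hAΛ : A ⊆ Λ) (σ : Config S A)
    (η : Config S (Λ \ A)) : restrictCfg hAΛ (glue hAΛ σ η) = σ := by
  funext a
  simp only [restrictCfg, glue, a.2, dif_pos]

lemma sum_glue {Λ A : Finset (Zd d)} (hAΛ : A ⊆ Λ) (F : Config S Λ → ℝ) :
    ∑ ω : Config S Λ, F ω =
      ∑ σ : Config S A, ∑ η : Config S (Λ \ A), F (glue hAΛ σ η) := by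
  have hbij : Function.Bijective
      (fun p : Config S A × Config S (Λ \ A) => glue hAΛ p.1 p.2) := by
    rw [Function.bijective_iff_has_inverse]
    refine ⟨fun ω => (restrictCfg hAΛ ω, restrictCfg Finset.sdiff_subset ω), ?_, ?_⟩
    · intro p
      refine Prod.ext (restrict_glue hAΛ p.1 p.2) ?_
      funext b
      have hb : b.1 ∉ A := (Finset.mem_sdiff.mp b.2).2
      simp only [restrictCfg, glue, hb, dif_neg, not_false_iff]
    · intro ω
      funext x
      by_cases h : x.1 ∈ A <;> simp only [glue, restrictCfg, h, dif_pos, dif_neg,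
        not_false_iff]
  calc ∑ ω : Config S Λ, F ω
      = ∑ p : Config S A × Config S (Λ \ A), F (glue hAΛ p.1 p.2) :=
        (Fintype.sum_bijective _ hbij _ _ (fun p => rfl)).symm
    _ = ∑ σ : Config S A, ∑ η : Config S (Λ \ A), F (glue hAΛ σ η) :=
        Fintype.sum_prod_type (fun p => F (glue hAΛ p.1 p.2))

lemma ham_glue_diff (Φ : Pot d S) (hTI : TransInv Φ) (hAS : AbsSummable Φ)
    {Λ A : Finset (Zd d)} (hAΛ : A ⊆ Λ) (σ σ' : Config S A) (η : Config S (Λ \ A)) :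
    |Ham Φ Λ (glue hAΛ σ η) - Ham Φ Λ (glue hAΛ σ' η)| ≤
      2 * (A.card * potFullNorm Φ) := by
  unfold Ham
  rw [← Finset.sum_sub_distrib]
  calc |∑ B ∈ Λ.powerset.attach,
          (Φ B.1 (restrictCfg (Finset.mem_powerset.mp B.2) (glue hAΛ σ η)) -
           Φ B.1 (restrictCfg (Finset.mem_powerset.mp B.2) (glue hAΛ σ' η)))|
      ≤ ∑ B ∈ Λ.powerset.attach,
          |Φ B.1 (restrictCfg (Finset.mem_powerset.mp B.2) (glue hAΛ σ η)) -
           Φ B.1 (restrictCfg (Finset.mem_powerset.mp B.2) (glue hAΛ σ' η))| :=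
        Finset.abs_sum_le_sum_abs _ _
    _ ≤ ∑ B ∈ Λ.powerset.attach,
          (if (A ∩ B.1).Nonempty then 2 * potNorm Φ B.1 else 0) := by
        refine Finset.sum_le_sum fun B _ => ?_
        by_cases hne : (A ∩ B.1).Nonempty
        · rw [if_pos hne]
          have h1 := abs_le_potNorm Φ B.1
            (restrictCfg (Finset.mem_powerset.mp B.2) (glue hAΛ σ η))
          have h2 := abs_le_potNorm Φ B.1
            (restrictCfg (Finset.mem_powerset.mp B.2) (glue hAΛ σ' η))
          have h3 := abs_sub (Φ B.1 (restrictCfg (Finset.mem_powerset.mp B.2) (glue hAΛ σ η)))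
            (Φ B.1 (restrictCfg (Finset.mem_powerset.mp B.2) (glue hAΛ σ' η)))
          linarith
        · rw [if_neg hne]
          have hres : restrictCfg (Finset.mem_powerset.mp B.2) (glue hAΛ σ η) =
              restrictCfg (Finset.mem_powerset.mp B.2) (glue hAΛ σ' η) := by
            funext b
            have hb : b.1 ∉ A := fun hbA =>
              hne ⟨b.1, Finset.mem_inter.mpr ⟨hbA, b.2⟩⟩
            simp only [restrictCfg, glue, hb, dif_neg, not_false_iff]
          rw [hres, sub_self, abs_zero]
    _ = ∑ B ∈ Λ.powerset, (if (A ∩ B).Nonempty then 2 * potNorm Φ B else 0) :=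
        Finset.sum_attach Λ.powerset
          (fun B => if (A ∩ B).Nonempty then 2 * potNorm Φ B else 0)
    _ = ∑ B ∈ Λ.powerset.filter (fun B => (A ∩ B).Nonempty), 2 * potNorm Φ B :=
        (Finset.sum_filter _ _).symm
    _ = 2 * ∑ B ∈ Λ.powerset.filter (fun B => (A ∩ B).Nonempty), potNorm Φ B :=
        (Finset.mul_sum _ _ _).symm
    _ ≤ 2 * (A.card * potFullNorm Φ) := by
        have := key_sum_bound Φ hTI hAS Λ A
        linarith

end Glue

set_option maxHeartbeats 1600000 in
/-- **Lemma 4.3**: if `Φ_A` is non-constant, then there is a continuous map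
`c : [0,∞) → (0,∞)`, independent of `Λ`, such that `Var_{Λ,β}(Φ_A) ≥ c(β)` for all
`β ≥ 0` and all finite `Λ ⊇ A`. -/
theorem lemma43 {d : ℕ} (hd : 0 < d) {S : Type} [Fintype S] [Nonempty S]
    (Φ : Pot d S) (hTI : TransInv Φ) (hAS : AbsSummable Φ)
    (hΦ0 : ∀ ω : Config S (∅ : Finset (Zd d)), Φ ∅ ω = 0)
    (A : Finset (Zd d)) (hA : A.Nonempty)
    (hnc : ∃ ω₁ ω₂ : Config S A, Φ A ω₁ ≠ Φ A ω₂) :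
    ∃ c : ℝ → ℝ, ContinuousOn c (Set.Ici 0) ∧ (∀ β ∈ Set.Ici (0 : ℝ), 0 < c β) ∧
      ∀ (β : ℝ), 0 ≤ β → ∀ (Λ : Finset (Zd d)) (hAΛ : A ⊆ Λ),
        c β ≤ gibbsVar Φ Λ β (fun ω => Φ A (restrictCfg hAΛ ω)) := by
  obtain ⟨ω₁, ω₂, hne⟩ := hnc
  set δ : ℝ := |Φ A ω₁ - Φ A ω₂| with hδdef
  have hδ : 0 < δ := abs_pos.mpr (sub_ne_zero.mpr hne)
  set K : ℝ := A.card * potFullNorm Φ with hKdef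
  set N : ℝ := (Fintype.card (Config S A) : ℝ) with hNdef
  have hN : 0 < N := by
    rw [hNdef]
    exact_mod_cast Fintype.card_pos
  refine ⟨fun β => δ ^ 2 / (4 * N) * Real.exp (-(2 * K) * β), ?_, ?_, ?_⟩
  · exact (by fun_prop : Continuous fun β => δ ^ 2 / (4 * N) * Real.exp (-(2 * K) * β)).continuousOn
  · intro β _
    positivity
  · intro β hβ Λ hAΛ
    set q : Config S Λ → ℝ := fun ω => Real.exp (-β * Ham Φ Λ ω) with hq
    have hqpos : ∀ ω, 0 < q ω := fun ω => Real.exp_pos _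
    set Zc : Config S (Λ \ A) → ℝ := fun η => ∑ σ : Config S A, q (glue hAΛ σ η) with hZc
    have hZcpos : ∀ η, 0 < Zc η :=
      fun η => Finset.sum_pos (fun σ _ => hqpos _) Finset.univ_nonempty
    have hratio : ∀ (η : Config S (Λ \ A)) (σ σ' : Config S A),
        q (glue hAΛ σ' η) ≤ Real.exp (2 * K * β) * q (glue hAΛ σ η) := by
      intro η σ σ'
      have hdd := ham_glue_diff Φ hTI hAS hAΛ σ' σ η
      rw [abs_le] at hdd
      rw [hq]
      simp only
      rw [← Real.exp_add]
      apply Real.exp_le_exp.mpr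
      rw [← hKdef] at hdd
      nlinarith [hdd.1, hdd.2]
    have hp : ∀ (η : Config S (Λ \ A)) (σ : Config S A),
        Real.exp (-(2 * K) * β) / N * Zc η ≤ q (glue hAΛ σ η) := by
      intro η σ
      have h1 : Zc η ≤ N * (Real.exp (2 * K * β) * q (glue hAΛ σ η)) := by
        rw [hZc]
        simp only
        calc ∑ σ' : Config S A, q (glue hAΛ σ' η)
            ≤ ∑ _σ' : Config S A, Real.exp (2 * K * β) * q (glue hAΛ σ η) :=
              Finset.sum_le_sum (fun σ' _ => hratio η σ σ')
          _ = N * (Real.exp (2 * K * β) * q (glue hAΛ σ η)) := by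
              rw [Finset.sum_const, Finset.card_univ, nsmul_eq_mul, hNdef]
      have h2 : Real.exp (-(2 * K) * β) * Real.exp (2 * K * β) = 1 := by
        rw [← Real.exp_add]
        norm_num
      calc Real.exp (-(2 * K) * β) / N * Zc η
          ≤ Real.exp (-(2 * K) * β) / N * (N * (Real.exp (2 * K * β) * q (glue hAΛ σ η))) :=
            mul_le_mul_of_nonneg_left h1 (by positivity)
        _ = (Real.exp (-(2 * K) * β) * Real.exp (2 * K * β)) * q (glue hAΛ σ η) := by
            field_simp
        _ = q (glue hAΛ σ η) := by rw [h2, one_mul]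
    set Ms : Config S (Λ \ A) → ℝ := fun η => ∑ σ : Config S A, Φ A σ * q (glue hAΛ σ η)
      with hMs
    set Ss : Config S (Λ \ A) → ℝ :=
      fun η => ∑ σ : Config S A, (Φ A σ) ^ 2 * q (glue hAΛ σ η) with hSs
    have hcond : ∀ η, δ ^ 2 / (4 * N) * Real.exp (-(2 * K) * β) * Zc η ≤
        Ss η - (Ms η) ^ 2 / Zc η := by
      intro η
      set m : ℝ := Ms η / Zc η with hm
      have hZne : Zc η ≠ 0 := (hZcpos η).ne'
      have hid : Ss η - (Ms η) ^ 2 / Zc η =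
          ∑ σ : Config S A, (Φ A σ - m) ^ 2 * q (glue hAΛ σ η) := by
        have hexp : ∑ σ : Config S A, (Φ A σ - m) ^ 2 * q (glue hAΛ σ η) =
            Ss η - 2 * m * Ms η + m ^ 2 * Zc η := by
          rw [hSs, hMs, hZc]
          simp only
          rw [Finset.mul_sum, Finset.mul_sum, ← Finset.sum_sub_distrib,
            ← Finset.sum_add_distrib]
          exact Finset.sum_congr rfl fun σ _ => by ring
        rw [hexp, hm]
        field_simp
        ring
      rw [hid]
      have htri : δ ≤ |Φ A ω₁ - m| + |Φ A ω₂ - m| := by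
        calc δ = |Φ A ω₁ - Φ A ω₂| := hδdef
          _ ≤ |Φ A ω₁ - m| + |m - Φ A ω₂| := abs_sub_le _ _ _
          _ = |Φ A ω₁ - m| + |Φ A ω₂ - m| := by rw [abs_sub_comm m]
      have hmain : ∀ σ₀ : Config S A, δ / 2 ≤ |Φ A σ₀ - m| →
          δ ^ 2 / (4 * N) * Real.exp (-(2 * K) * β) * Zc η ≤
            ∑ σ : Config S A, (Φ A σ - m) ^ 2 * q (glue hAΛ σ η) := by
        intro σ₀ hσ₀
        have hsq : (δ / 2) ^ 2 ≤ (Φ A σ₀ - m) ^ 2 := by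
          rw [← sq_abs (Φ A σ₀ - m)]
          exact pow_le_pow_left₀ (by positivity) hσ₀ 2
        calc δ ^ 2 / (4 * N) * Real.exp (-(2 * K) * β) * Zc η
            = (δ / 2) ^ 2 * (Real.exp (-(2 * K) * β) / N * Zc η) := by ring
          _ ≤ (Φ A σ₀ - m) ^ 2 * q (glue hAΛ σ₀ η) := by
              have h1 := hp η σ₀
              have h2 : 0 ≤ Real.exp (-(2 * K) * β) / N * Zc η := by
                have := (hZcpos η).le
                positivity
              exact mul_le_mul hsq h1 h2 (sq_nonneg _)
          _ ≤ ∑ σ : Config S A, (Φ A σ - m) ^ 2 * q (glue hAΛ σ η) :=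
              Finset.single_le_sum
                (f := fun σ => (Φ A σ - m) ^ 2 * q (glue hAΛ σ η))
                (fun σ _ => mul_nonneg (sq_nonneg _) (hqpos _).le)
                (Finset.mem_univ σ₀)
      rcases le_or_gt (δ / 2) |Φ A ω₁ - m| with hc | hc
      · exact hmain ω₁ hc
      · exact hmain ω₂ (by linarith)
    -- global assembly
    have hZq : Zfun Φ Λ β = ∑ ω : Config S Λ, q ω := by
      rw [Zfun, hq]
    have hZeq : Zfun Φ Λ β = ∑ η : Config S (Λ \ A), Zc η := by
      rw [hZq, sum_glue hAΛ q, Finset.sum_comm, hZc]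
    have hZpos : 0 < Zfun Φ Λ β := by
      rw [hZeq]
      exact Finset.sum_pos (fun η _ => hZcpos η) Finset.univ_nonempty
    have hEf : gibbsExp Φ Λ β (fun ω => Φ A (restrictCfg hAΛ ω)) =
        (∑ η : Config S (Λ \ A), Ms η) / Zfun Φ Λ β := by
      rw [gibbsExp]
      congr 1
      calc ∑ ω : Config S Λ, Φ A (restrictCfg hAΛ ω) * Real.exp (-β * Ham Φ Λ ω)
          = ∑ ω : Config S Λ, Φ A (restrictCfg hAΛ ω) * q ω := by rw [hq]
        _ = ∑ σ : Config S A, ∑ η : Config S (Λ \ A),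
              Φ A (restrictCfg hAΛ (glue hAΛ σ η)) * q (glue hAΛ σ η) :=
            sum_glue hAΛ _
        _ = ∑ σ : Config S A, ∑ η : Config S (Λ \ A), Φ A σ * q (glue hAΛ σ η) := by
            refine Finset.sum_congr rfl fun σ _ => Finset.sum_congr rfl fun η _ => ?_
            rw [restrict_glue]
        _ = ∑ η : Config S (Λ \ A), ∑ σ : Config S A, Φ A σ * q (glue hAΛ σ η) :=
            Finset.sum_comm
        _ = ∑ η : Config S (Λ \ A), Ms η := by rw [hMs]
    have hEf2 : gibbsExp Φ Λ β (fun ω => (Φ A (restrictCfg hAΛ ω)) ^ 2) =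
        (∑ η : Config S (Λ \ A), Ss η) / Zfun Φ Λ β := by
      rw [gibbsExp]
      congr 1
      calc ∑ ω : Config S Λ, (Φ A (restrictCfg hAΛ ω)) ^ 2 * Real.exp (-β * Ham Φ Λ ω)
          = ∑ ω : Config S Λ, (Φ A (restrictCfg hAΛ ω)) ^ 2 * q ω := by rw [hq]
        _ = ∑ σ : Config S A, ∑ η : Config S (Λ \ A),
              (Φ A (restrictCfg hAΛ (glue hAΛ σ η))) ^ 2 * q (glue hAΛ σ η) :=
            sum_glue hAΛ _
        _ = ∑ σ : Config S A, ∑ η : Config S (Λ \ A), (Φ A σ) ^ 2 * q (glue hAΛ σ η) := by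
            refine Finset.sum_congr rfl fun σ _ => Finset.sum_congr rfl fun η _ => ?_
            rw [restrict_glue]
        _ = ∑ η : Config S (Λ \ A), ∑ σ : Config S A, (Φ A σ) ^ 2 * q (glue hAΛ σ η) :=
            Finset.sum_comm
        _ = ∑ η : Config S (Λ \ A), Ss η := by rw [hSs]
    rw [gibbsVar, hEf, hEf2]
    set Z : ℝ := Zfun Φ Λ β with hZdef
    have hCS : ((∑ η : Config S (Λ \ A), Ms η) / Z) ^ 2 ≤
        (∑ η : Config S (Λ \ A), (Ms η) ^ 2 / Zc η) / Z := by
      have h1 := Finset.sq_sum_div_le_sum_sq_div Finset.univ Ms (fun η _ => hZcpos η)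
      rw [← hZeq] at h1
      calc ((∑ η : Config S (Λ \ A), Ms η) / Z) ^ 2
          = ((∑ η : Config S (Λ \ A), Ms η) ^ 2 / Z) / Z := by
            rw [div_pow]
            ring
        _ ≤ (∑ η : Config S (Λ \ A), (Ms η) ^ 2 / Zc η) / Z := by gcongr
    have hsum : δ ^ 2 / (4 * N) * Real.exp (-(2 * K) * β) * Z ≤
        ∑ η : Config S (Λ \ A), (Ss η - (Ms η) ^ 2 / Zc η) := by
      rw [hZeq, Finset.mul_sum]
      exact Finset.sum_le_sum fun η _ => hcond η
    calc δ ^ 2 / (4 * N) * Real.exp (-(2 * K) * β)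
        = δ ^ 2 / (4 * N) * Real.exp (-(2 * K) * β) * Z / Z := by
          field_simp
      _ ≤ (∑ η : Config S (Λ \ A), (Ss η - (Ms η) ^ 2 / Zc η)) / Z := by gcongr
      _ = (∑ η : Config S (Λ \ A), Ss η) / Z -
            (∑ η : Config S (Λ \ A), (Ms η) ^ 2 / Zc η) / Z := by
          rw [Finset.sum_sub_distrib, sub_div]
      _ ≤ (∑ η : Config S (Λ \ A), Ss η) / Z -
            ((∑ η : Config S (Λ \ A), Ms η) / Z) ^ 2 := by linarith
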